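/- For every pure Nash equilibrium b of a GSP position game satisfying the no-over assumption, the liquid price of anarchy and stability of GSP, VCG, and EGFP all equal exactly 2: the supremum over games of OPT/LW at the worst (and best) pure equilibrium is 2. -/

import Mathlib

/-! General position games with `n` players and `n` positions.
`α j` is the CTR of position `j`, `v i` and `c i` are the value and budget of player
`i`, an assignment is a permutation `σ` sending each player to her position, and
`σ.symm j` is the player occupying position `j`. -/

/-- A ranking `σ` is consistent with scalar bids `b` if players in earlier positions
bid at least as much (non-increasing bid order). -/
def RankConsistent {n : ℕ} (b : Fin n → ℝ) (σ : Equiv.Perm (Fin n)) : Prop :=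
  ∀ i j : Fin n, σ i < σ j → b j ≤ b i

/-- The bid of the player ranked just below player `i` (zero for the last position). -/
noncomputable def nextBid {n : ℕ} (b : Fin n → ℝ) (σ : Equiv.Perm (Fin n)) (i : Fin n) : ℝ :=
  if h : (σ i : ℕ) + 1 < n then b (σ.symm ⟨(σ i : ℕ) + 1, h⟩) else 0

/-- GSP utility: player `i` gets CTR of her position times her value, and pays the
next highest bid per click. -/
noncomputable def gspUtil {n : ℕ} (α v : Fin n → ℝ) (b : Fin n → ℝ)
    (σ : Equiv.Perm (Fin n)) (i : Fin n) : ℝ :=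
  α (σ i) * v i - α (σ i) * nextBid b σ i

/-- The no-over assumption for a bid `y` of player `i` occupying position `p`:
CTR times bid is at most the minimum of the player's total value and her budget. -/
def NoOverAt {n : ℕ} (α v c : Fin n → ℝ) (i p : Fin n) (y : ℝ) : Prop :=
  α p * y ≤ min (α p * v i) (c i)

/-- Pure Nash equilibrium of the GSP position game under the no-over assumption:
bids are non-negative, `σ` ranks the players by bids, everyone satisfies no-over, and
no player can improve her utility by a unilateral no-over deviation, whatever
consistent ranking results. -/
def GspEquilibrium {n : ℕ} (α v c : Fin n → ℝ) (b : Fin n → ℝ)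
    (σ : Equiv.Perm (Fin n)) : Prop :=
  (∀ i, 0 ≤ b i) ∧ RankConsistent b σ ∧ (∀ i, NoOverAt α v c i (σ i) (b i)) ∧
    ∀ (i : Fin n) (y : ℝ) (τ : Equiv.Perm (Fin n)), 0 ≤ y →
      RankConsistent (Function.update b i y) τ → NoOverAt α v c i (τ i) y →
        gspUtil α v (Function.update b i y) τ i ≤ gspUtil α v b σ i

/-- Total VCG payment of player `i`: the externality `∑_{k > σ i} b_{π(k)} (α_{k-1} - α_k)`. -/
noncomputable def vcgPay {n : ℕ} (α : Fin n → ℝ) (b : Fin n → ℝ)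
    (σ : Equiv.Perm (Fin n)) (i : Fin n) : ℝ :=
  ∑ k ∈ Finset.univ.filter (fun k : Fin n => σ i < k),
    b (σ.symm k) * (α ⟨(k : ℕ) - 1, lt_of_le_of_lt (Nat.sub_le _ _) k.isLt⟩ - α k)

/-- VCG utility of player `i`. -/
noncomputable def vcgUtil {n : ℕ} (α v : Fin n → ℝ) (b : Fin n → ℝ)
    (σ : Equiv.Perm (Fin n)) (i : Fin n) : ℝ :=
  α (σ i) * v i - vcgPay α b σ i

/-- Pure Nash equilibrium of the VCG position game under the no-over assumption. -/
def VcgEquilibrium {n : ℕ} (α v c : Fin n → ℝ) (b : Fin n → ℝ)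
    (σ : Equiv.Perm (Fin n)) : Prop :=
  (∀ i, 0 ≤ b i) ∧ RankConsistent b σ ∧ (∀ i, NoOverAt α v c i (σ i) (b i)) ∧
    ∀ (i : Fin n) (y : ℝ) (τ : Equiv.Perm (Fin n)), 0 ≤ y →
      RankConsistent (Function.update b i y) τ → NoOverAt α v c i (τ i) y →
        vcgUtil α v (Function.update b i y) τ i ≤ vcgUtil α v b σ i

/-- EGFP consistency: positions are allocated sequentially, so the player winning
position `p` bids at least as much for `p` as every player allocated at `p` or later. -/
def EgfpConsistent {n : ℕ} (b : Fin n → Fin n → ℝ) (σ : Equiv.Perm (Fin n)) : Prop :=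
  ∀ (p i : Fin n), p ≤ σ i → b i p ≤ b (σ.symm p) p

/-- EGFP utility: first-price payments, each winner pays her own bid for her position. -/
noncomputable def egfpUtil {n : ℕ} (α v : Fin n → ℝ) (b : Fin n → Fin n → ℝ)
    (σ : Equiv.Perm (Fin n)) (i : Fin n) : ℝ :=
  α (σ i) * v i - b i (σ i)

/-- Pure Nash equilibrium of the EGFP position game, with payments within budgets. -/
def EgfpEquilibrium {n : ℕ} (α v c : Fin n → ℝ) (b : Fin n → Fin n → ℝ)
    (σ : Equiv.Perm (Fin n)) : Prop :=
  (∀ i p, 0 ≤ b i p) ∧ EgfpConsistent b σ ∧ (∀ i, b i (σ i) ≤ c i) ∧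
    ∀ (i : Fin n) (y : Fin n → ℝ) (τ : Equiv.Perm (Fin n)), (∀ p, 0 ≤ y p) →
      EgfpConsistent (Function.update b i y) τ → y (τ i) ≤ c i →
        egfpUtil α v (Function.update b i y) τ i ≤ egfpUtil α v b σ i

/-- Liquid welfare of the assignment `σ`: each player's value is capped by her budget. -/
noncomputable def liquidWelfare {n : ℕ} (α v c : Fin n → ℝ) (σ : Equiv.Perm (Fin n)) : ℝ :=
  ∑ i, min (α (σ i) * v i) (c i)

def shiftCyc {n : ℕ} (p s : Fin n) : Equiv.Perm (Fin n) where
  toFun q := ⟨if (q : ℕ) = s ∧ (p:ℕ) < (s:ℕ) then p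
    else if (p:ℕ) ≤ q ∧ (q:ℕ) < s then (q:ℕ)+1 else q,
    by split_ifs <;> omega⟩
  invFun q := ⟨if (q : ℕ) = p ∧ (p:ℕ) < (s:ℕ) then s
    else if (p:ℕ) < q ∧ (q:ℕ) ≤ s then (q:ℕ)-1 else q,
    by split_ifs <;> omega⟩
  left_inv q := by ext; simp only; split_ifs <;> omega
  right_inv q := by ext; simp only; split_ifs <;> omega

lemma shiftCyc_apply {n : ℕ} (p s q : Fin n) :
    ((shiftCyc p s q : Fin n) : ℕ) = if (q : ℕ) = s ∧ (p:ℕ) < (s:ℕ) then (p:ℕ)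
      else if (p:ℕ) ≤ q ∧ (q:ℕ) < s then (q:ℕ)+1 else (q:ℕ) := rfl

lemma shiftCyc_symm_apply {n : ℕ} (p s q : Fin n) :
    (((shiftCyc p s).symm q : Fin n) : ℕ) = if (q : ℕ) = p ∧ (p:ℕ) < (s:ℕ) then (s:ℕ)
      else if (p:ℕ) < q ∧ (q:ℕ) ≤ s then (q:ℕ)-1 else (q:ℕ) := rfl

/-- Insert player `i` at position `p` (below her equilibrium position), shifting
the intermediate players down, with bid equal to that of the old occupant of `p`. -/
lemma exists_insert_rank {n : ℕ} (b : Fin n → ℝ) (σ : Equiv.Perm (Fin n))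
    (hrc : RankConsistent b σ) (i p : Fin n) (hp : (p : ℕ) < (σ i : ℕ)) :
    ∃ τ : Equiv.Perm (Fin n), τ i = p ∧
      RankConsistent (Function.update b i (b (σ.symm p))) τ ∧
      nextBid (Function.update b i (b (σ.symm p))) τ i = b (σ.symm p) ∧
      (Function.update b i (b (σ.symm p))) i = b (σ.symm p) := by
  set s := σ i with hs
  set j := σ.symm p with hj
  set y := b j with hy
  set b' := Function.update b i y with hb'
  have hjne : j ≠ i := by
    intro h
    have : σ j = σ i := by rw [h]
    rw [hj, Equiv.apply_symm_apply] at this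
    rw [this] at hp; omega
  set τ := σ.trans (shiftCyc p s) with hτ
  have hτi : τ i = p := by
    ext; simp only [hτ, Equiv.trans_apply, ← hs, shiftCyc_apply]; simp [hp]
  have hg : ∀ q r : Fin n, (q:ℕ) ≤ (r:ℕ) → b (σ.symm r) ≤ b (σ.symm q) := by
    intro q r h
    rcases eq_or_lt_of_le h with h' | h'
    · have : q = r := Fin.ext h'
      rw [this]
    · refine hrc (σ.symm q) (σ.symm r) ?_
      rw [Equiv.apply_symm_apply, Equiv.apply_symm_apply]
      exact h'
  set μ : Fin n → Fin n := fun q =>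
    ⟨if (q:ℕ) = (p:ℕ) then (p:ℕ) else if (p:ℕ) < (q:ℕ) ∧ (q:ℕ) ≤ (s:ℕ) then (q:ℕ)-1 else (q:ℕ),
      by split_ifs <;> omega⟩ with hμ
  have hμmono : ∀ q r : Fin n, (q:ℕ) ≤ (r:ℕ) → ((μ q : Fin n):ℕ) ≤ ((μ r : Fin n):ℕ) := by
    intro q r h
    simp only [hμ]
    split_ifs <;> omega
  have hw : ∀ q : Fin n, b' (τ.symm q) = b (σ.symm (μ q)) := by
    intro q
    have hτs : τ.symm q = σ.symm ((shiftCyc p s).symm q) := rfl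
    by_cases hq : (q:ℕ) = (p:ℕ)
    · have h1 : (shiftCyc p s).symm q = σ i := by
        ext; rw [shiftCyc_symm_apply]; simp [hq, hp]; rfl
      have h2 : μ q = p := by ext; simp only [hμ]; rw [if_pos hq]
      rw [hτs, h1, Equiv.symm_apply_apply, hb', Function.update_self, h2]
    · have h1 : (shiftCyc p s).symm q = μ q := by
        ext; rw [shiftCyc_symm_apply]; simp only [hμ]
        rw [if_neg (show ¬((q:ℕ)=(p:ℕ) ∧ (p:ℕ)<(s:ℕ)) from fun h => hq h.1), if_neg hq]
      have h3 : σ.symm (μ q) ≠ i := by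
        intro h
        have : μ q = σ i := by
          have := congrArg σ h
          rwa [Equiv.apply_symm_apply] at this
        have hv : ((μ q : Fin n):ℕ) = (s:ℕ) := by rw [this]
        simp only [hμ] at hv
        have hsi := s.isLt
        split_ifs at hv <;> omega
      rw [hτs, h1, hb', Function.update_of_ne h3]
  refine ⟨τ, hτi, ?_, ?_, Function.update_self _ _ _⟩
  · intro k l hkl
    have h1 := hw (τ k)
    have h2 := hw (τ l)
    rw [Equiv.symm_apply_apply] at h1 h2
    rw [h1, h2]
    exact hg _ _ (hμmono _ _ (le_of_lt hkl))
  · have hlt : (p:ℕ)+1 < n := by have := s.isLt; omega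
    have hμp : μ ⟨(p:ℕ)+1, hlt⟩ = p := by
      ext; simp only [hμ]; split_ifs <;> omega
    simp only [nextBid, hτi, hlt, dif_pos]
    rw [hw ⟨(p:ℕ)+1, hlt⟩, hμp]

lemma nextBid_nonneg {n : ℕ} (b : Fin n → ℝ) (hb : ∀ i, 0 ≤ b i) (σ : Equiv.Perm (Fin n))
    (i : Fin n) : 0 ≤ nextBid b σ i := by
  unfold nextBid
  split
  · exact hb _
  · exact le_refl 0

lemma lw_le_of_key {n : ℕ} (α v c : Fin n → ℝ) (σ o : Equiv.Perm (Fin n))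
    (key : ∀ i, min (α (o i) * v i) (c i) ≤
      min (α (σ i) * v i) (c i) + min (α (σ (σ.symm (o i))) * v (σ.symm (o i))) (c (σ.symm (o i)))) :
    2 * liquidWelfare α v c σ ≥ liquidWelfare α v c o := by
  have h1 : liquidWelfare α v c o ≤ liquidWelfare α v c σ +
      ∑ i, min (α (σ ((o.trans σ.symm) i)) * v ((o.trans σ.symm) i)) (c ((o.trans σ.symm) i)) := by
    rw [liquidWelfare, liquidWelfare, ← Finset.sum_add_distrib]
    exact Finset.sum_le_sum fun i _ => key i
  have h2 : ∑ i, min (α (σ ((o.trans σ.symm) i)) * v ((o.trans σ.symm) i)) (c ((o.trans σ.symm) i))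
      = liquidWelfare α v c σ :=
    Equiv.sum_comp (o.trans σ.symm) (fun k => min (α (σ k) * v k) (c k))
  rw [h2] at h1
  linarith

theorem gsp_upper (n : ℕ) (α v c : Fin n → ℝ) (hα : Antitone α) (hα' : ∀ j, 0 < α j)
    (hv : ∀ i, 0 ≤ v i) (hc : ∀ i, 0 ≤ c i)
    (b : Fin n → ℝ) (σ : Equiv.Perm (Fin n)) (heq : GspEquilibrium α v c b σ)
    (o : Equiv.Perm (Fin n)) : 2 * liquidWelfare α v c σ ≥ liquidWelfare α v c o := by
  obtain ⟨hb0, hrc, hno, hdev⟩ := heq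
  apply lw_le_of_key
  intro i
  set p := o i with hp
  set j := σ.symm p with hj
  set s := σ i with hs
  have hjp : σ j = p := Equiv.apply_symm_apply _ _
  have hLj : min (α (σ j) * v j) (c j) = min (α p * v j) (c j) := by rw [hjp]
  have hLj0 : 0 ≤ min (α (σ j) * v j) (c j) :=
    le_min (mul_nonneg (hα' _).le (hv _)) (hc _)
  have hLi0 : 0 ≤ min (α s * v i) (c i) :=
    le_min (mul_nonneg (hα' _).le (hv _)) (hc _)
  have hnoj : α p * b j ≤ min (α p * v j) (c j) := by
    have := hno j; rwa [NoOverAt, hjp] at this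
  by_cases hcase : (s:ℕ) ≤ (p:ℕ)
  · have h1 : α p ≤ α s := hα hcase
    have : min (α p * v i) (c i) ≤ min (α s * v i) (c i) :=
      min_le_min (mul_le_mul_of_nonneg_right h1 (hv i)) le_rfl
    linarith
  · push_neg at hcase
    by_cases hbig : min (α p * v i) (c i) < α p * b j
    · have := hnoj
      rw [← hLj] at this
      linarith
    · push_neg at hbig
      obtain ⟨τ, hτi, hτrc, hτnext, _⟩ := exists_insert_rank b σ hrc i p hcase
      have hnoi : NoOverAt α v c i (τ i) (b j) := by rw [hτi]; exact hbig
      have hdev' := hdev i (b j) τ (hb0 j) hτrc hnoi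
      have hUdev : gspUtil α v (Function.update b i (b j)) τ i = α p * v i - α p * b j := by
        rw [gspUtil, hτi, hτnext]
      have hUeq : gspUtil α v b σ i ≤ α s * v i := by
        rw [gspUtil]
        have := mul_nonneg (hα' (σ i)).le (nextBid_nonneg b hb0 σ i)
        rw [← hs]
        linarith
      have h2 : α p * v i ≤ α s * v i + α p * b j := by
        rw [hUdev] at hdev'; linarith
      have h4 : α p * b j ≤ min (α (σ j) * v j) (c j) := by rw [hLj]; exact hnoj
      have h5 : 0 ≤ α p * b j := mul_nonneg (hα' _).le (hb0 _)
      have h6 : min (α p * v i) (c i) ≤ min (α s * v i) (c i) + α p * b j := by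
        have h7 : min (α p * v i) (c i) ≤ min (α s * v i + α p * b j) (c i + α p * b j) :=
          le_min (le_trans (min_le_left _ _) h2) (by linarith [min_le_right (α p * v i) (c i)])
        rwa [min_add_add_right] at h7
      linarith

lemma vcg_tele {n : ℕ} (α : Fin n → ℝ) (p : Fin n) (hn : 0 < n) :
    ∑ k ∈ Finset.univ.filter (fun k : Fin n => p < k),
      (α ⟨(k : ℕ) - 1, lt_of_le_of_lt (Nat.sub_le _ _) k.isLt⟩ - α k)
      = α p - α ⟨n-1, Nat.sub_lt hn Nat.one_pos⟩ := by
  set f : ℕ → ℝ := fun t => α ⟨min ((p:ℕ) + t) (n-1), by omega⟩ with hf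
  have h := Finset.sum_range_sub' f (n - 1 - (p:ℕ))
  have hpl := p.isLt
  have h1 : ∑ k ∈ Finset.univ.filter (fun k : Fin n => p < k),
      (α ⟨(k : ℕ) - 1, lt_of_le_of_lt (Nat.sub_le _ _) k.isLt⟩ - α k)
      = ∑ t ∈ Finset.range (n - 1 - (p:ℕ)), (f t - f (t+1)) := by
    refine Finset.sum_nbij' (fun k => (k : ℕ) - (p:ℕ) - 1)
      (fun t => ⟨min ((p:ℕ) + 1 + t) (n-1), by omega⟩) ?_ ?_ ?_ ?_ ?_
    · intro k hk
      simp only [Finset.mem_filter, Finset.mem_univ, true_and, Fin.lt_def] at hk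
      simp only [Finset.mem_range]
      have := k.isLt
      omega
    · intro t ht
      simp only [Finset.mem_range] at ht
      simp only [Finset.mem_filter, Finset.mem_univ, true_and, Fin.lt_def]
      omega
    · intro k hk
      simp only [Finset.mem_filter, Finset.mem_univ, true_and, Fin.lt_def] at hk
      have := k.isLt
      ext
      simp only
      omega
    · intro t ht
      simp only [Finset.mem_range] at ht
      simp only
      omega
    · intro k hk
      simp only [Finset.mem_filter, Finset.mem_univ, true_and, Fin.lt_def] at hk
      have hkl := k.isLt
      have e1 : f ((k:ℕ) - (p:ℕ) - 1) = α ⟨(k:ℕ) - 1, by omega⟩ := by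
        simp only [hf]
        congr 1
        ext
        simp only
        omega
      have e2 : f ((k:ℕ) - (p:ℕ) - 1 + 1) = α k := by
        simp only [hf]
        congr 1
        ext
        simp only
        omega
      rw [e1, e2]
  rw [h1, h]
  have e3 : f 0 = α p := by
    simp only [hf]
    congr 1
    ext
    simp only
    omega
  have e4 : f (n - 1 - (p:ℕ)) = α ⟨n-1, Nat.sub_lt hn Nat.one_pos⟩ := by
    simp only [hf]
    congr 1
    ext
    simp only
    omega
  rw [e3, e4]

lemma vcgPay_nonneg {n : ℕ} (α : Fin n → ℝ) (hα : Antitone α) (b : Fin n → ℝ)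
    (hb : ∀ i, 0 ≤ b i) (σ : Equiv.Perm (Fin n)) (i : Fin n) : 0 ≤ vcgPay α b σ i := by
  refine Finset.sum_nonneg fun k _ => mul_nonneg (hb _) ?_
  rw [sub_nonneg]
  exact hα (by simp [Fin.le_def])

lemma vcgPay_le {n : ℕ} (α : Fin n → ℝ) (hα : Antitone α) (hα' : ∀ j, 0 < α j)
    (b : Fin n → ℝ) (σ : Equiv.Perm (Fin n)) (i : Fin n) (M : ℝ) (hM : 0 ≤ M)
    (hbd : ∀ k : Fin n, σ i < k → b (σ.symm k) ≤ M) :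
    vcgPay α b σ i ≤ α (σ i) * M := by
  have hn : 0 < n := (σ i).pos
  have h1 : vcgPay α b σ i ≤ ∑ k ∈ Finset.univ.filter (fun k : Fin n => σ i < k),
      M * (α ⟨(k : ℕ) - 1, lt_of_le_of_lt (Nat.sub_le _ _) k.isLt⟩ - α k) := by
    refine Finset.sum_le_sum fun k hk => ?_
    simp only [Finset.mem_filter, Finset.mem_univ, true_and] at hk
    refine mul_le_mul_of_nonneg_right (hbd k hk) ?_
    rw [sub_nonneg]
    exact hα (by simp [Fin.le_def])
  rw [← Finset.mul_sum, vcg_tele α (σ i) hn] at h1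
  have h2 : M * (α (σ i) - α ⟨n-1, Nat.sub_lt hn Nat.one_pos⟩) ≤ M * α (σ i) := by
    have := (hα' ⟨n-1, Nat.sub_lt hn Nat.one_pos⟩).le
    nlinarith
  rw [mul_comm] at h2
  linarith

theorem vcg_upper (n : ℕ) (α v c : Fin n → ℝ) (hα : Antitone α) (hα' : ∀ j, 0 < α j)
    (hv : ∀ i, 0 ≤ v i) (hc : ∀ i, 0 ≤ c i)
    (b : Fin n → ℝ) (σ : Equiv.Perm (Fin n)) (heq : VcgEquilibrium α v c b σ)
    (o : Equiv.Perm (Fin n)) : 2 * liquidWelfare α v c σ ≥ liquidWelfare α v c o := by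
  obtain ⟨hb0, hrc, hno, hdev⟩ := heq
  apply lw_le_of_key
  intro i
  set p := o i with hp
  set j := σ.symm p with hj
  set s := σ i with hs
  have hjp : σ j = p := Equiv.apply_symm_apply _ _
  have hLj : min (α (σ j) * v j) (c j) = min (α p * v j) (c j) := by rw [hjp]
  have hLj0 : 0 ≤ min (α (σ j) * v j) (c j) :=
    le_min (mul_nonneg (hα' _).le (hv _)) (hc _)
  have hLi0 : 0 ≤ min (α s * v i) (c i) :=
    le_min (mul_nonneg (hα' _).le (hv _)) (hc _)
  have hnoj : α p * b j ≤ min (α p * v j) (c j) := by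
    have := hno j; rwa [NoOverAt, hjp] at this
  by_cases hcase : (s:ℕ) ≤ (p:ℕ)
  · have h1 : α p ≤ α s := hα hcase
    have : min (α p * v i) (c i) ≤ min (α s * v i) (c i) :=
      min_le_min (mul_le_mul_of_nonneg_right h1 (hv i)) le_rfl
    linarith
  · push_neg at hcase
    by_cases hbig : min (α p * v i) (c i) < α p * b j
    · have := hnoj
      rw [← hLj] at this
      linarith
    · push_neg at hbig
      obtain ⟨τ, hτi, hτrc, _, hbi⟩ := exists_insert_rank b σ hrc i p hcase
      set b' := Function.update b i (b j) with hb'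
      have hnoi : NoOverAt α v c i (τ i) (b j) := by rw [hτi]; exact hbig
      have hdev' := hdev i (b j) τ (hb0 j) hτrc hnoi
      have hpayle : vcgPay α b' τ i ≤ α p * b j := by
        rw [← hτi]
        refine vcgPay_le α hα hα' b' τ i (b j) (hb0 j) fun k hk => ?_
        have h1 : τ i < τ (τ.symm k) := by rwa [Equiv.apply_symm_apply]
        have := hτrc i (τ.symm k) h1
        rwa [hbi] at this
      have hUdev : α p * v i - α p * b j ≤ vcgUtil α v b' τ i := by
        rw [vcgUtil, hτi]
        linarith
      have hUeq : vcgUtil α v b σ i ≤ α s * v i := by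
        rw [vcgUtil]
        have := vcgPay_nonneg α hα b hb0 σ i
        rw [← hs]
        linarith
      have h2 : α p * v i ≤ α s * v i + α p * b j := by linarith
      have h4 : α p * b j ≤ min (α (σ j) * v j) (c j) := by rw [hLj]; exact hnoj
      have h5 : 0 ≤ α p * b j := mul_nonneg (hα' _).le (hb0 _)
      have h6 : min (α p * v i) (c i) ≤ min (α s * v i) (c i) + α p * b j := by
        have h7 : min (α p * v i) (c i) ≤ min (α s * v i + α p * b j) (c i + α p * b j) :=
          le_min (le_trans (min_le_left _ _) h2) (by linarith [min_le_right (α p * v i) (c i)])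
        rwa [min_add_add_right] at h7
      linarith

lemma exists_consistent_max {n : ℕ} (B : Fin n → Fin n → ℝ) (S : Finset (Equiv.Perm (Fin n)))
    (hne : S.Nonempty) (Prot : Fin n → Prop)
    (hswap : ∀ τ ∈ S, ∀ (q k : Fin n), ¬ Prot q → q < τ k → τ.trans (Equiv.swap q (τ k)) ∈ S)
    (Hlow : ∀ τ ∈ S, ∀ (q k : Fin n), Prot q → q ≤ τ k → B k q ≤ B (τ.symm q) q) :
    ∃ τ ∈ S, EgfpConsistent B τ := by
  set W : Equiv.Perm (Fin n) → Lex (Fin n → ℝ) :=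
    fun τ => toLex (fun q => B (τ.symm q) q) with hW
  obtain ⟨w, hw, hmax'⟩ := Finset.exists_maximal (hne.image W)
  have hmax : ∀ x ∈ S.image W, ¬ w < x := fun x hx hlt => (not_le.2 hlt) (hmax' hx hlt.le)
  obtain ⟨τ, hτ, rfl⟩ := Finset.mem_image.1 hw
  refine ⟨τ, hτ, fun q k hqk => ?_⟩
  by_cases hprot : Prot q
  · exact Hlow τ hτ q k hprot hqk
  by_contra hcon
  push_neg at hcon
  rcases eq_or_lt_of_le hqk with heq | hlt
  · rw [heq, Equiv.symm_apply_apply] at hcon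
    exact absurd rfl (ne_of_lt hcon)
  set τ' := τ.trans (Equiv.swap q (τ k)) with hτ'
  have hmem : τ' ∈ S := hswap τ hτ q k hprot hlt
  refine hmax (W τ') (Finset.mem_image_of_mem W hmem) ?_
  have hsymm : ∀ r : Fin n, τ'.symm r = τ.symm (Equiv.swap q (τ k) r) := by
    intro r
    simp [hτ', Equiv.symm_trans_apply]
  refine ⟨q, ?_, ?_⟩
  · intro r hr
    have h1 : r ≠ q := ne_of_lt hr
    have h2 : r ≠ τ k := ne_of_lt (lt_trans hr hlt)
    show B (τ.symm r) r = B (τ'.symm r) r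
    rw [hsymm, Equiv.swap_apply_of_ne_of_ne h1 h2]
  · show B (τ.symm q) q < B (τ'.symm q) q
    rw [hsymm, Equiv.swap_apply_left, Equiv.symm_apply_apply]
    exact hcon

lemma exists_consistent {n : ℕ} (B : Fin n → Fin n → ℝ) :
    ∃ τ : Equiv.Perm (Fin n), EgfpConsistent B τ := by
  obtain ⟨τ, _, h⟩ := exists_consistent_max B Finset.univ ⟨1, Finset.mem_univ 1⟩
    (fun _ => False) (fun τ hτ q k _ _ => Finset.mem_univ _) (fun _ _ _ _ h => h.elim)
  exact ⟨τ, h⟩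

theorem egfp_upper (n : ℕ) (α v c : Fin n → ℝ) (hα : Antitone α) (hα' : ∀ j, 0 < α j)
    (hv : ∀ i, 0 ≤ v i) (hc : ∀ i, 0 ≤ c i)
    (b : Fin n → Fin n → ℝ) (σ : Equiv.Perm (Fin n)) (heq : EgfpEquilibrium α v c b σ)
    (o : Equiv.Perm (Fin n)) : 2 * liquidWelfare α v c σ ≥ liquidWelfare α v c o := by
  classical
  obtain ⟨hb0, hcons, hbud, hdev⟩ := heq
  have hIR : ∀ k, b k (σ k) ≤ α (σ k) * v k := by
    intro k
    obtain ⟨τ', hτ'⟩ := exists_consistent (Function.update b k (fun _ => 0))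
    have h := hdev k (fun _ => 0) τ' (fun _ => le_refl 0) hτ' (hc k)
    have hL : egfpUtil α v (Function.update b k (fun _ => 0)) τ' k = α (τ' k) * v k := by
      simp [egfpUtil, Function.update_self]
    rw [hL, egfpUtil] at h
    have := mul_nonneg (hα' (τ' k)).le (hv k)
    linarith
  apply lw_le_of_key
  intro i
  set p := o i with hp
  set j := σ.symm p with hj
  set s := σ i with hs
  have hjp : σ j = p := Equiv.apply_symm_apply _ _
  have hLj : min (α (σ j) * v j) (c j) = min (α p * v j) (c j) := by rw [hjp]
  have hLj0 : 0 ≤ min (α (σ j) * v j) (c j) :=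
    le_min (mul_nonneg (hα' _).le (hv _)) (hc _)
  have hLi0 : 0 ≤ min (α s * v i) (c i) :=
    le_min (mul_nonneg (hα' _).le (hv _)) (hc _)
  have hT : b j p ≤ min (α p * v j) (c j) := by
    have h1 := hIR j
    have h2 := hbud j
    rw [hjp] at h1 h2
    exact le_min h1 h2
  by_cases hcase : (s:ℕ) ≤ (p:ℕ)
  · have h1 : α p ≤ α s := hα hcase
    have : min (α p * v i) (c i) ≤ min (α s * v i) (c i) :=
      min_le_min (mul_le_mul_of_nonneg_right h1 (hv i)) le_rfl
    linarith
  push_neg at hcase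
  by_cases hbig : c i < b j p
  · have h3 : min (α p * v i) (c i) ≤ c i := min_le_right _ _
    rw [← hLj] at hT
    linarith
  push_neg at hbig
  -- the deviating bid of player i: the bid of j at p, zero elsewhere
  set y : Fin n → ℝ := fun r => if r = p then b j p else 0 with hy
  set B := Function.update b i y with hB
  have hine : j ≠ i := by
    intro h
    rw [h] at hjp
    rw [← hs] at hjp
    rw [← hjp] at hcase
    omega
  -- the set of admissible rankings
  set S := Finset.univ.filter
    (fun τ : Equiv.Perm (Fin n) => τ i = p ∧ ∀ k, σ k < p → τ k = σ k) with hS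
  have hmemS : ∀ τ : Equiv.Perm (Fin n),
      τ ∈ S ↔ (τ i = p ∧ ∀ k, σ k < p → τ k = σ k) := by
    intro τ; simp [hS]
  have hne : S.Nonempty := by
    refine ⟨σ.trans (shiftCyc p s), (hmemS _).2 ⟨?_, ?_⟩⟩
    · ext
      simp only [Equiv.trans_apply, shiftCyc_apply, ← hs]
      simp [hcase]
    · intro k hk
      rw [Fin.lt_def] at hk
      ext
      simp only [Equiv.trans_apply, shiftCyc_apply]
      have : ¬((σ k : ℕ) = (s:ℕ) ∧ (p:ℕ) < (s:ℕ)) := by omega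
      rw [if_neg this, if_neg (by omega)]
  have hswap : ∀ τ ∈ S, ∀ (q k : Fin n), ¬ (q ≤ p) → q < τ k →
      τ.trans (Equiv.swap q (τ k)) ∈ S := by
    intro τ hτ q k hq hlt
    obtain ⟨hτi, hpre⟩ := (hmemS τ).1 hτ
    rw [not_le] at hq
    refine (hmemS _).2 ⟨?_, ?_⟩
    · simp only [Equiv.trans_apply, hτi]
      exact Equiv.swap_apply_of_ne_of_ne (ne_of_lt hq) (ne_of_lt (lt_trans hq hlt))
    · intro l hl
      simp only [Equiv.trans_apply, hpre l hl]
      exact Equiv.swap_apply_of_ne_of_ne (ne_of_lt (lt_trans hl hq))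
        (ne_of_lt (lt_trans (lt_trans hl hq) hlt))
  have Hlow : ∀ τ ∈ S, ∀ (q k : Fin n), q ≤ p → q ≤ τ k → B k q ≤ B (τ.symm q) q := by
    intro τ hτ q k hprot hqk
    obtain ⟨hτi, hpre⟩ := (hmemS τ).1 hτ
    rcases eq_or_lt_of_le hprot with hqp | hqp
    · -- q = p
      have hsymm : τ.symm q = i := by
        rw [Equiv.symm_apply_eq, hτi, hqp]
      rw [hsymm, hB, Function.update_self, hy]
      simp only [hqp, if_pos rfl]
      by_cases hk : k = i
      · rw [hk, Function.update_self]; simp [hqp]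
      · rw [Function.update_of_ne hk]
        have hσk : p ≤ σ k := by
          by_contra hcon
          push_neg at hcon
          rw [hpre k hcon, hqp] at hqk
          exact absurd hqk (not_le.2 hcon)
        exact hcons p k hσk
    · -- q < p
      have hwin : τ.symm q = σ.symm q := by
        rw [Equiv.symm_apply_eq, hpre (σ.symm q) (by rwa [Equiv.apply_symm_apply]),
          Equiv.apply_symm_apply]
      have hne2 : σ.symm q ≠ i := by
        intro h
        have : σ (σ.symm q) = s := by rw [h, hs]
        rw [Equiv.apply_symm_apply] at this
        rw [this] at hqp
        rw [Fin.lt_def] at hqp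
        omega
      rw [hwin, hB, Function.update_of_ne hne2]
      by_cases hk : k = i
      · rw [hk, Function.update_self, hy]
        simp only [if_neg (ne_of_lt hqp)]
        exact hb0 _ _
      · rw [Function.update_of_ne hk]
        have hσk : q ≤ σ k := by
          by_cases hc2 : σ k < p
          · rw [← hpre k hc2]; exact hqk
          · push_neg at hc2
            exact le_of_lt (lt_of_lt_of_le hqp hc2)
        exact hcons q k hσk
  obtain ⟨τ, hτ, hτcons⟩ := exists_consistent_max B S hne (fun q => q ≤ p) hswap Hlow
  obtain ⟨hτi, _⟩ := (hmemS τ).1 hτ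
  have hy0 : ∀ r, 0 ≤ y r := by
    intro r
    rw [hy]
    dsimp only
    split
    · exact hb0 _ _
    · exact le_refl 0
  have hybud : y (τ i) ≤ c i := by
    rw [hτi, hy]; simpa using hbig
  have h := hdev i y τ hy0 hτcons hybud
  have hL : egfpUtil α v B τ i = α p * v i - b j p := by
    rw [egfpUtil, hτi, hB, Function.update_self, hy]
    simp
  have hR : egfpUtil α v b σ i ≤ α s * v i := by
    rw [egfpUtil, ← hs]
    have := hb0 i (σ i)
    rw [← hs] at this
    linarith
  rw [hL] at h
  have h2 : α p * v i ≤ α s * v i + b j p := by linarith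
  have h6 : min (α p * v i) (c i) ≤ min (α s * v i) (c i) + b j p := by
    have hT0 : 0 ≤ b j p := hb0 _ _
    have h7 : min (α p * v i) (c i) ≤ min (α s * v i + b j p) (c i + b j p) :=
      le_min (le_trans (min_le_left _ _) h2) (by linarith [min_le_right (α p * v i) (c i)])
    rwa [min_add_add_right] at h7
  rw [← hLj] at hT
  linarith

-- helpers
lemma perm2 : ∀ τ : Equiv.Perm (Fin 2), τ = 1 ∨ τ = Equiv.swap 0 1 := by decide

lemma fin2cases (x : Fin 2) : x = 0 ∨ x = 1 := by
  fin_cases x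
  · exact Or.inl rfl
  · exact Or.inr rfl

lemma nextBid_of_zero {b : Fin 2 → ℝ} {σ : Equiv.Perm (Fin 2)} {i : Fin 2} (h : σ i = 0) :
    nextBid b σ i = b (σ.symm 1) := by
  rw [nextBid, h]
  norm_num

lemma nextBid_of_one {b : Fin 2 → ℝ} {σ : Equiv.Perm (Fin 2)} {i : Fin 2} (h : σ i = 1) :
    nextBid b σ i = 0 := by
  rw [nextBid, h]
  norm_num

noncomputable def α2 (lam : ℝ) : Fin 2 → ℝ := fun q => if q = 0 then 1 else lam⁻¹
noncomputable def v2 (lam : ℝ) : Fin 2 → ℝ := fun i => if i = 0 then lam else 1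
noncomputable def c2 : Fin 2 → ℝ := fun _ => 1

section game
variable {lam : ℝ} (hlam : 3 ≤ lam)
include hlam

lemma hl0 : (0:ℝ) < lam := by linarith
lemma hinv0 : (0:ℝ) < lam⁻¹ := inv_pos.2 (hl0 hlam)
lemma hinv1 : lam⁻¹ ≤ 1 := by
  have h1 : lam⁻¹ * lam = 1 := inv_mul_cancel₀ (ne_of_gt (hl0 hlam))
  nlinarith [hinv0 hlam]

lemma alpha2_anti : Antitone (α2 lam) := by
  intro a b hab
  rcases fin2cases a with rfl | rfl
  · rcases fin2cases b with rfl | rfl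
    · exact le_refl _
    · simp only [α2]
      norm_num
      exact hinv1 hlam
  · rcases fin2cases b with rfl | rfl
    · exact absurd hab (by decide)
    · exact le_refl _

lemma alpha2_pos : ∀ j, 0 < α2 lam j := by
  intro j
  rcases fin2cases j with rfl | rfl
  · norm_num [α2]
  · simp only [α2]
    norm_num
    linarith

lemma v2_nonneg : ∀ i, 0 ≤ v2 lam i := by
  intro i
  rcases fin2cases i with rfl | rfl
  · simp only [v2]
    norm_num
    linarith
  · norm_num [v2]

omit hlam in
lemma c2_nonneg : ∀ i, 0 ≤ c2 i := fun _ => by norm_num [c2]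

lemma lw_id : liquidWelfare (α2 lam) (v2 lam) c2 1 = 1 + lam⁻¹ := by
  rw [liquidWelfare, Fin.sum_univ_two]
  simp only [Equiv.Perm.one_apply, α2, v2, c2]
  norm_num
  rw [min_eq_right (by linarith), min_eq_left (hinv1 hlam)]

lemma lw_swap : liquidWelfare (α2 lam) (v2 lam) c2 (Equiv.swap 0 1) = 2 := by
  rw [liquidWelfare, Fin.sum_univ_two, Equiv.swap_apply_left, Equiv.swap_apply_right]
  simp only [α2, v2, c2]
  norm_num
  rw [inv_mul_cancel₀ (ne_of_gt (hl0 hlam))]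
  norm_num

end game

lemma final_ineq (δ lam : ℝ) (hδ : 0 < δ) (hlam : 3 ≤ lam) (h2 : 2 ≤ δ * lam) :
    (2 - δ) * (1 + lam⁻¹) < 2 := by
  have h0 : (0:ℝ) < lam := by linarith
  have hL0 : 0 < lam⁻¹ := inv_pos.2 h0
  have hml : lam⁻¹ * lam = 1 := inv_mul_cancel₀ (ne_of_gt h0)
  have h2L : 2 * lam⁻¹ ≤ δ := by
    have := mul_le_mul_of_nonneg_right h2 hL0.le
    calc 2 * lam⁻¹ ≤ δ * lam * lam⁻¹ := this
    _ = δ * (lam⁻¹ * lam) := by ring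
    _ = δ := by rw [hml]; ring
  nlinarith [mul_pos hδ hL0]

noncomputable def b2 : Fin 2 → ℝ := fun i => if i = 0 then 1 else 0

section game2
variable {lam : ℝ} (hlam : 3 ≤ lam)
include hlam

lemma gsp_ex : GspEquilibrium (α2 lam) (v2 lam) c2 b2 1 := by
  have hml : lam⁻¹ * lam = 1 := inv_mul_cancel₀ (ne_of_gt (hl0 hlam))
  refine ⟨?_, ?_, ?_, ?_⟩
  · intro i; rcases fin2cases i with rfl | rfl <;> norm_num [b2]
  · intro i j hij
    rcases fin2cases i with rfl | rfl <;> rcases fin2cases j with rfl | rfl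
    · exact absurd hij (lt_irrefl _)
    · norm_num [b2]
    · exact absurd hij (by decide)
    · exact absurd hij (lt_irrefl _)
  · intro i
    rcases fin2cases i with rfl | rfl
    · rw [NoOverAt]
      simp only [Equiv.Perm.one_apply, α2, v2, c2, b2]
      norm_num
      linarith
    · rw [NoOverAt]
      simp only [Equiv.Perm.one_apply, α2, v2, c2, b2]
      norm_num
      positivity
  · intro i y τ hy hτ hno
    rcases fin2cases i with rfl | rfl
    · have hRHS : gspUtil (α2 lam) (v2 lam) b2 1 0 = lam := by
        rw [gspUtil, nextBid_of_zero rfl]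
        simp only [Equiv.Perm.one_apply, α2, v2, b2]
        norm_num
        decide
      rw [hRHS]
      rcases perm2 τ with rfl | rfl
      · rw [gspUtil, nextBid_of_zero rfl]
        have h1 : Function.update b2 0 y ((1 : Equiv.Perm (Fin 2)).symm 1) = 0 := by
          rw [show ((1 : Equiv.Perm (Fin 2)).symm 1) = 1 from rfl,
            Function.update_of_ne (by decide)]
          norm_num [b2]
        rw [h1]
        simp only [Equiv.Perm.one_apply, α2, v2]
        norm_num
      · rw [gspUtil, nextBid_of_one (Equiv.swap_apply_left 0 1), Equiv.swap_apply_left]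
        simp only [α2, v2]
        norm_num
        linarith [hml]
    · have hRHS : gspUtil (α2 lam) (v2 lam) b2 1 1 = lam⁻¹ := by
        rw [gspUtil, nextBid_of_one rfl]
        simp only [Equiv.Perm.one_apply, α2, v2, b2]
        norm_num
      rw [hRHS]
      rcases perm2 τ with rfl | rfl
      · rw [gspUtil, nextBid_of_one rfl]
        simp only [Equiv.Perm.one_apply, α2, v2]
        norm_num
      · rw [gspUtil, nextBid_of_zero (Equiv.swap_apply_right 0 1), Equiv.swap_apply_right]
        have h1 : Function.update b2 1 y ((Equiv.swap (0:Fin 2) 1).symm 1) = 1 := by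
          rw [Equiv.symm_swap, Equiv.swap_apply_right, Function.update_of_ne (by decide)]
          norm_num [b2]
        rw [h1]
        simp only [α2, v2]
        norm_num
        positivity

lemma gsp_forced (b : Fin 2 → ℝ) (σ : Equiv.Perm (Fin 2))
    (heq : GspEquilibrium (α2 lam) (v2 lam) c2 b σ) : σ = 1 := by
  rcases perm2 σ with rfl | rfl
  · rfl
  exfalso
  obtain ⟨hb0, hrc, hno, hdev⟩ := heq
  have hml : lam⁻¹ * lam = 1 := inv_mul_cancel₀ (ne_of_gt (hl0 hlam))
  have hb1le : b 1 ≤ 1 := by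
    have h := hno 1
    rw [NoOverAt, Equiv.swap_apply_right] at h
    simp only [α2, v2, c2] at h
    norm_num at h
    linarith [h]
  have hrc' : RankConsistent (Function.update b 0 1) 1 := by
    intro i j hij
    rcases fin2cases i with rfl | rfl <;> rcases fin2cases j with rfl | rfl
    · exact absurd hij (lt_irrefl _)
    · rw [Function.update_of_ne (by decide), Function.update_self]
      exact hb1le
    · exact absurd hij (by decide)
    · exact absurd hij (lt_irrefl _)
  have hno' : NoOverAt (α2 lam) (v2 lam) c2 0 ((1 : Equiv.Perm (Fin 2)) 0) 1 := by
    rw [NoOverAt]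
    simp only [Equiv.Perm.one_apply, α2, v2, c2]
    norm_num
    linarith
  have h := hdev 0 1 1 zero_le_one hrc' hno'
  have hL : gspUtil (α2 lam) (v2 lam) (Function.update b 0 1) 1 0 = lam - b 1 := by
    rw [gspUtil, nextBid_of_zero rfl]
    rw [show ((1 : Equiv.Perm (Fin 2)).symm 1) = 1 from rfl,
      Function.update_of_ne (by decide)]
    simp only [Equiv.Perm.one_apply, α2, v2]
    norm_num
  have hR : gspUtil (α2 lam) (v2 lam) b (Equiv.swap 0 1) 0 = 1 := by
    rw [gspUtil, nextBid_of_one (Equiv.swap_apply_left 0 1), Equiv.swap_apply_left]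
    simp only [α2, v2]
    norm_num
    rw [hml]
  rw [hL, hR] at h
  linarith

end game2

lemma vcgPay_of_zero {α b : Fin 2 → ℝ} {σ : Equiv.Perm (Fin 2)} {i : Fin 2} (h : σ i = 0) :
    vcgPay α b σ i = b (σ.symm 1) * (α 0 - α 1) := by
  rw [vcgPay, h]
  rw [show Finset.univ.filter (fun k : Fin 2 => 0 < k) = {1} from by decide,
    Finset.sum_singleton]
  norm_num

lemma vcgPay_of_one {α b : Fin 2 → ℝ} {σ : Equiv.Perm (Fin 2)} {i : Fin 2} (h : σ i = 1) :
    vcgPay α b σ i = 0 := by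
  rw [vcgPay, h]
  rw [show Finset.univ.filter (fun k : Fin 2 => 1 < k) = (∅ : Finset (Fin 2)) from by decide,
    Finset.sum_empty]

section game3
variable {lam : ℝ} (hlam : 3 ≤ lam)
include hlam

lemma vcg_ex : VcgEquilibrium (α2 lam) (v2 lam) c2 b2 1 := by
  have hml : lam⁻¹ * lam = 1 := inv_mul_cancel₀ (ne_of_gt (hl0 hlam))
  obtain ⟨g1, g2, g3, _⟩ := gsp_ex hlam
  refine ⟨g1, g2, g3, ?_⟩
  intro i y τ hy hτ hno
  rcases fin2cases i with rfl | rfl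
  · have hRHS : vcgUtil (α2 lam) (v2 lam) b2 1 0 = lam := by
      rw [vcgUtil, vcgPay_of_zero rfl]
      rw [show ((1 : Equiv.Perm (Fin 2)).symm 1) = 1 from rfl]
      simp only [Equiv.Perm.one_apply, α2, v2, b2]
      norm_num
    rw [hRHS]
    rcases perm2 τ with rfl | rfl
    · rw [vcgUtil, vcgPay_of_zero rfl]
      rw [show ((1 : Equiv.Perm (Fin 2)).symm 1) = 1 from rfl,
        Function.update_of_ne (by decide)]
      simp only [Equiv.Perm.one_apply, α2, v2, b2]
      norm_num
    · rw [vcgUtil, vcgPay_of_one (Equiv.swap_apply_left 0 1), Equiv.swap_apply_left]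
      simp only [α2, v2]
      norm_num
      linarith [hml]
  · have hRHS : vcgUtil (α2 lam) (v2 lam) b2 1 1 = lam⁻¹ := by
      rw [vcgUtil, vcgPay_of_one rfl]
      simp only [Equiv.Perm.one_apply, α2, v2, b2]
      norm_num
    rw [hRHS]
    rcases perm2 τ with rfl | rfl
    · rw [vcgUtil, vcgPay_of_one rfl]
      simp only [Equiv.Perm.one_apply, α2, v2]
      norm_num
    · rw [vcgUtil, vcgPay_of_zero (Equiv.swap_apply_right 0 1), Equiv.swap_apply_right]
      rw [show ((Equiv.swap (0:Fin 2) 1).symm 1) = 0 from rfl,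
        Function.update_of_ne (by decide)]
      simp only [α2, v2, b2]
      norm_num

lemma vcg_forced (b : Fin 2 → ℝ) (σ : Equiv.Perm (Fin 2))
    (heq : VcgEquilibrium (α2 lam) (v2 lam) c2 b σ) : σ = 1 := by
  rcases perm2 σ with rfl | rfl
  · rfl
  exfalso
  obtain ⟨hb0, hrc, hno, hdev⟩ := heq
  have hml : lam⁻¹ * lam = 1 := inv_mul_cancel₀ (ne_of_gt (hl0 hlam))
  have hi0 : (0:ℝ) < lam⁻¹ := hinv0 hlam
  have hi1 : lam⁻¹ ≤ 1 := hinv1 hlam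
  have hb1le : b 1 ≤ 1 := by
    have h := hno 1
    rw [NoOverAt, Equiv.swap_apply_right] at h
    simp only [α2, v2, c2] at h
    norm_num at h
    linarith [h]
  have hrc' : RankConsistent (Function.update b 0 1) 1 := by
    intro i j hij
    rcases fin2cases i with rfl | rfl <;> rcases fin2cases j with rfl | rfl
    · exact absurd hij (lt_irrefl _)
    · rw [Function.update_of_ne (by decide), Function.update_self]
      exact hb1le
    · exact absurd hij (by decide)
    · exact absurd hij (lt_irrefl _)
  have hno' : NoOverAt (α2 lam) (v2 lam) c2 0 ((1 : Equiv.Perm (Fin 2)) 0) 1 := by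
    rw [NoOverAt]
    simp only [Equiv.Perm.one_apply, α2, v2, c2]
    norm_num
    linarith
  have h := hdev 0 1 1 zero_le_one hrc' hno'
  have hL : vcgUtil (α2 lam) (v2 lam) (Function.update b 0 1) 1 0
      = lam - b 1 * (1 - lam⁻¹) := by
    rw [vcgUtil, vcgPay_of_zero rfl]
    rw [show ((1 : Equiv.Perm (Fin 2)).symm 1) = 1 from rfl,
      Function.update_of_ne (by decide)]
    simp only [Equiv.Perm.one_apply, α2, v2]
    norm_num
  have hR : vcgUtil (α2 lam) (v2 lam) b (Equiv.swap 0 1) 0 = 1 := by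
    rw [vcgUtil, vcgPay_of_one (Equiv.swap_apply_left 0 1), Equiv.swap_apply_left]
    simp only [α2, v2]
    norm_num
    rw [hml]
  rw [hL, hR] at h
  nlinarith [mul_le_mul_of_nonneg_right hb1le (sub_nonneg.2 hi1), hb0 1]

end game3

noncomputable def b2e : Fin 2 → Fin 2 → ℝ := fun _ p => if p = 0 then 1 else 0

section game4
variable {lam : ℝ} (hlam : 3 ≤ lam)
include hlam

lemma egfp_ex : EgfpEquilibrium (α2 lam) (v2 lam) c2 b2e 1 := by
  have hml : lam⁻¹ * lam = 1 := inv_mul_cancel₀ (ne_of_gt (hl0 hlam))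
  have hi0 : (0:ℝ) < lam⁻¹ := hinv0 hlam
  refine ⟨?_, ?_, ?_, ?_⟩
  · intro i p; rcases fin2cases p with rfl | rfl <;> norm_num [b2e]
  · intro p k _
    exact le_refl _
  · intro i
    rcases fin2cases i with rfl | rfl <;> norm_num [b2e, c2, Equiv.Perm.one_apply]
  · intro i y τ hy hcons hbud
    rcases fin2cases i with rfl | rfl
    · have hRHS : egfpUtil (α2 lam) (v2 lam) b2e 1 0 = lam - 1 := by
        rw [egfpUtil]
        simp only [Equiv.Perm.one_apply, α2, v2, b2e]
        norm_num
      rw [hRHS]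
      rcases perm2 τ with rfl | rfl
      · have hkey := hcons 0 1 (by decide)
        rw [Function.update_of_ne (by decide),
          show ((1 : Equiv.Perm (Fin 2)).symm 0) = 0 from rfl, Function.update_self] at hkey
        have hb10 : b2e 1 0 = 1 := by norm_num [b2e]
        rw [hb10] at hkey
        rw [egfpUtil, Function.update_self]
        simp only [Equiv.Perm.one_apply, α2, v2]
        norm_num
        linarith
      · rw [egfpUtil, Function.update_self, Equiv.swap_apply_left]
        simp only [α2, v2]
        norm_num
        have := hy 1
        nlinarith [hml]
    · have hRHS : egfpUtil (α2 lam) (v2 lam) b2e 1 1 = lam⁻¹ := by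
        rw [egfpUtil]
        simp only [Equiv.Perm.one_apply, α2, v2, b2e]
        norm_num
      rw [hRHS]
      rcases perm2 τ with rfl | rfl
      · rw [egfpUtil, Function.update_self]
        simp only [Equiv.Perm.one_apply, α2, v2]
        norm_num
        exact hy 1
      · have hkey := hcons 0 0 (by decide)
        rw [Function.update_of_ne (by decide),
          show ((Equiv.swap (0:Fin 2) 1).symm 0) = 1 from rfl, Function.update_self] at hkey
        have hb00 : b2e 0 0 = 1 := by norm_num [b2e]
        rw [hb00] at hkey
        rw [egfpUtil, Function.update_self, Equiv.swap_apply_right]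
        simp only [α2, v2]
        norm_num
        linarith

lemma egfp_forced (b : Fin 2 → Fin 2 → ℝ) (σ : Equiv.Perm (Fin 2))
    (heq : EgfpEquilibrium (α2 lam) (v2 lam) c2 b σ) : σ = 1 := by
  rcases perm2 σ with rfl | rfl
  · rfl
  exfalso
  obtain ⟨hb0, hcons, hbud, hdev⟩ := heq
  have hml : lam⁻¹ * lam = 1 := inv_mul_cancel₀ (ne_of_gt (hl0 hlam))
  have hb10 : b 1 0 ≤ 1 := by
    have h := hbud 1
    rw [Equiv.swap_apply_right] at h
    simpa [c2] using h
  set y : Fin 2 → ℝ := fun p => if p = 0 then 1 else 0 with hy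
  have hy0 : ∀ p, 0 ≤ y p := by
    intro p; rcases fin2cases p with rfl | rfl <;> norm_num [hy]
  have hcons' : EgfpConsistent (Function.update b 0 y) 1 := by
    intro p k hp
    rcases fin2cases p with rfl | rfl <;> rcases fin2cases k with rfl | rfl
    · exact le_refl _
    · rw [Function.update_of_ne (by decide),
        show ((1 : Equiv.Perm (Fin 2)).symm 0) = 0 from rfl, Function.update_self]
      rw [hy]
      norm_num
      exact hb10
    · exact absurd hp (by decide)
    · exact le_refl _
  have hbud' : y ((1 : Equiv.Perm (Fin 2)) 0) ≤ c2 0 := by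
    rw [show ((1 : Equiv.Perm (Fin 2)) 0) = 0 from rfl, hy]
    norm_num [c2]
  have h := hdev 0 y 1 hy0 hcons' hbud'
  have hL : egfpUtil (α2 lam) (v2 lam) (Function.update b 0 y) 1 0 = lam - 1 := by
    rw [egfpUtil, Function.update_self]
    simp only [Equiv.Perm.one_apply, α2, v2, hy]
    norm_num
  have hR : egfpUtil (α2 lam) (v2 lam) b (Equiv.swap 0 1) 0 = 1 - b 0 1 := by
    rw [egfpUtil, Equiv.swap_apply_left]
    simp only [α2, v2]
    norm_num
    nlinarith [hml]
  rw [hL, hR] at h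
  linarith [hb0 0 1]

end game4

/-- The liquid price of anarchy and the liquid price of stability of GSP, VCG (under
the no-over assumption) and EGFP are all exactly 2.  Upper bounds: at every pure Nash
equilibrium of every position game induced by each mechanism, twice the equilibrium
liquid welfare is at least the liquid welfare of every assignment (hence at least the
optimum).  Lower bounds: for every δ > 0 there is a position game for each mechanism
that admits a pure Nash equilibrium and in which *every* pure Nash equilibrium σ has
(2 - δ) · LW(σ) below the liquid welfare of some assignment; hence both the worst-case
and the best-case equilibrium ratios approach 2. -/
theorem stmt17 :
    -- GSP: LPoA (and hence LPoS) at most 2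
    (∀ (n : ℕ) (α v c : Fin n → ℝ), Antitone α → (∀ j, 0 < α j) →
      (∀ i, 0 ≤ v i) → (∀ i, 0 ≤ c i) →
      ∀ (b : Fin n → ℝ) (σ : Equiv.Perm (Fin n)), GspEquilibrium α v c b σ →
        ∀ o : Equiv.Perm (Fin n), 2 * liquidWelfare α v c σ ≥ liquidWelfare α v c o) ∧
    -- VCG: LPoA (and hence LPoS) at most 2
    (∀ (n : ℕ) (α v c : Fin n → ℝ), Antitone α → (∀ j, 0 < α j) →
      (∀ i, 0 ≤ v i) → (∀ i, 0 ≤ c i) →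
      ∀ (b : Fin n → ℝ) (σ : Equiv.Perm (Fin n)), VcgEquilibrium α v c b σ →
        ∀ o : Equiv.Perm (Fin n), 2 * liquidWelfare α v c σ ≥ liquidWelfare α v c o) ∧
    -- EGFP: LPoA (and hence LPoS) at most 2
    (∀ (n : ℕ) (α v c : Fin n → ℝ), Antitone α → (∀ j, 0 < α j) →
      (∀ i, 0 ≤ v i) → (∀ i, 0 ≤ c i) →
      ∀ (b : Fin n → Fin n → ℝ) (σ : Equiv.Perm (Fin n)), EgfpEquilibrium α v c b σ →
        ∀ o : Equiv.Perm (Fin n), 2 * liquidWelfare α v c σ ≥ liquidWelfare α v c o) ∧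
    -- GSP: LPoS (and hence LPoA) at least 2
    (∀ δ : ℝ, 0 < δ → ∃ (n : ℕ) (α v c : Fin n → ℝ), Antitone α ∧ (∀ j, 0 < α j) ∧
      (∀ i, 0 ≤ v i) ∧ (∀ i, 0 ≤ c i) ∧
      (∃ (b : Fin n → ℝ) (σ : Equiv.Perm (Fin n)), GspEquilibrium α v c b σ) ∧
      (∀ (b : Fin n → ℝ) (σ : Equiv.Perm (Fin n)), GspEquilibrium α v c b σ →
        ∃ o : Equiv.Perm (Fin n),
          (2 - δ) * liquidWelfare α v c σ < liquidWelfare α v c o)) ∧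
    -- VCG: LPoS (and hence LPoA) at least 2
    (∀ δ : ℝ, 0 < δ → ∃ (n : ℕ) (α v c : Fin n → ℝ), Antitone α ∧ (∀ j, 0 < α j) ∧
      (∀ i, 0 ≤ v i) ∧ (∀ i, 0 ≤ c i) ∧
      (∃ (b : Fin n → ℝ) (σ : Equiv.Perm (Fin n)), VcgEquilibrium α v c b σ) ∧
      (∀ (b : Fin n → ℝ) (σ : Equiv.Perm (Fin n)), VcgEquilibrium α v c b σ →
        ∃ o : Equiv.Perm (Fin n),
          (2 - δ) * liquidWelfare α v c σ < liquidWelfare α v c o)) ∧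
    -- EGFP: LPoS (and hence LPoA) at least 2
    (∀ δ : ℝ, 0 < δ → ∃ (n : ℕ) (α v c : Fin n → ℝ), Antitone α ∧ (∀ j, 0 < α j) ∧
      (∀ i, 0 ≤ v i) ∧ (∀ i, 0 ≤ c i) ∧
      (∃ (b : Fin n → Fin n → ℝ) (σ : Equiv.Perm (Fin n)), EgfpEquilibrium α v c b σ) ∧
      (∀ (b : Fin n → Fin n → ℝ) (σ : Equiv.Perm (Fin n)), EgfpEquilibrium α v c b σ →
        ∃ o : Equiv.Perm (Fin n),
          (2 - δ) * liquidWelfare α v c σ < liquidWelfare α v c o)) := by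
  refine ⟨gsp_upper, vcg_upper, egfp_upper, ?_, ?_, ?_⟩
  · -- GSP lower bound
    intro δ hδ
    set lam := max 3 (2/δ) with hlamdef
    have hlam : (3:ℝ) ≤ lam := le_max_left _ _
    have h2 : 2 ≤ δ * lam := by
      have := (div_le_iff₀ hδ).1 (le_max_right 3 (2/δ))
      linarith [this]
    exact ⟨2, α2 lam, v2 lam, c2, alpha2_anti hlam, alpha2_pos hlam, v2_nonneg hlam,
      c2_nonneg, ⟨b2, 1, gsp_ex hlam⟩, fun b σ heq => by
        rw [gsp_forced hlam b σ heq, lw_id hlam]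
        exact ⟨Equiv.swap 0 1, by rw [lw_swap hlam]; exact final_ineq δ lam hδ hlam h2⟩⟩
  · -- VCG lower bound
    intro δ hδ
    set lam := max 3 (2/δ) with hlamdef
    have hlam : (3:ℝ) ≤ lam := le_max_left _ _
    have h2 : 2 ≤ δ * lam := by
      have := (div_le_iff₀ hδ).1 (le_max_right 3 (2/δ))
      linarith [this]
    exact ⟨2, α2 lam, v2 lam, c2, alpha2_anti hlam, alpha2_pos hlam, v2_nonneg hlam,
      c2_nonneg, ⟨b2, 1, vcg_ex hlam⟩, fun b σ heq => by
        rw [vcg_forced hlam b σ heq, lw_id hlam]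
        exact ⟨Equiv.swap 0 1, by rw [lw_swap hlam]; exact final_ineq δ lam hδ hlam h2⟩⟩
  · -- EGFP lower bound
    intro δ hδ
    set lam := max 3 (2/δ) with hlamdef
    have hlam : (3:ℝ) ≤ lam := le_max_left _ _
    have h2 : 2 ≤ δ * lam := by
      have := (div_le_iff₀ hδ).1 (le_max_right 3 (2/δ))
      linarith [this]
    exact ⟨2, α2 lam, v2 lam, c2, alpha2_anti hlam, alpha2_pos hlam, v2_nonneg hlam,
      c2_nonneg, ⟨b2e, 1, egfp_ex hlam⟩, fun b σ heq => by
        rw [egfp_forced hlam b σ heq, lw_id hlam]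
        exact ⟨Equiv.swap 0 1, by rw [lw_swap hlam]; exact final_ineq δ lam hδ hlam h2⟩⟩
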